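/- Let R'' be a Noetherian local domain, I an ideal, x ∈ I, and suppose: (a) the integral closure of (I/(x))^n in R''/(x) equals (I/(x))^n for all n ≥ 1, and (b) the colon equality (integral closure of I^n) : x = integral closure of I^{n−1} holds for all n ≥ 1. Then I^n is integrally closed for all n ≥ 1 (given I itself is integrally closed). -/
import Mathlib

/-- `r` is integral over the ideal `I`: it satisfies an equation
`r^m + a_1 r^(m-1) + ... + a_m = 0` with `a_j ∈ I^j`. -/
def IsIntegralOverIdeal {R : Type*} [CommRing R] (I : Ideal R) (r : R) : Prop :=
  ∃ m : ℕ, 0 < m ∧ ∃ a : ℕ → R, (∀ j ∈ Finset.Icc 1 m, a j ∈ I ^ j) ∧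
    r ^ m + ∑ j ∈ Finset.Icc 1 m, a j * r ^ (m - j) = 0

/-- An ideal is integrally closed if it contains every element integral over it. -/
def Ideal.IsIntClosed {R : Type*} [CommRing R] (I : Ideal R) : Prop :=
  ∀ r, IsIntegralOverIdeal I r → r ∈ I

/-- Binomial expansion in the shape needed below. -/
lemma my_add_pow {R : Type*} [CommRing R] (y p : R) (n : ℕ) :
    (y + p) ^ n = y ^ n + ∑ i ∈ Finset.Icc 1 n, (n.choose (n - i) : R) * p ^ i * y ^ (n - i) := by
  rw [add_pow, Finset.sum_range_succ]
  simp only [Nat.choose_self, Nat.sub_self, pow_zero, mul_one, Nat.cast_one]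
  rw [add_comm]
  congr 1
  refine Finset.sum_nbij' (fun k => n - k) (fun i => n - i) ?_ ?_ ?_ ?_ ?_
  · intro k hk; simp only [Finset.mem_range] at hk; simp only [Finset.mem_Icc]; omega
  · intro i hi; simp only [Finset.mem_Icc] at hi; simp only [Finset.mem_range]; omega
  · intro k hk; simp only [Finset.mem_range] at hk; show n - (n - k) = k; omega
  · intro i hi; simp only [Finset.mem_Icc] at hi; show n - (n - i) = i; omega
  · intro k hk
    simp only [Finset.mem_range] at hk
    have h1 : n - (n - k) = k := by omega
    rw [h1]
    ring

/-- Shifting an integral element by an element of the ideal stays integral. -/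
lemma IsIntegralOverIdeal.sub_mem {R : Type*} [CommRing R] {J : Ideal R} {r p : R}
    (hp : p ∈ J) (h : IsIntegralOverIdeal J r) : IsIntegralOverIdeal J (r - p) := by
  obtain ⟨m, hm, a, haJ, heq⟩ := h
  refine ⟨m, hm, fun i => (m.choose (m - i) : R) * p ^ i +
      ∑ j ∈ Finset.Icc 1 i, a j * (((m - j).choose (m - i) : R) * p ^ (i - j)), ?_, ?_⟩
  · intro i hi
    simp only [Finset.mem_Icc] at hi
    refine Ideal.add_mem _ (Ideal.mul_mem_left _ _ (Ideal.pow_mem_pow hp i)) ?_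
    refine Ideal.sum_mem _ fun j hj => ?_
    simp only [Finset.mem_Icc] at hj
    obtain ⟨t, rfl⟩ : ∃ t, i = j + t := ⟨i - j, by omega⟩
    simp only [Nat.add_sub_cancel_left]
    rw [pow_add]
    exact Ideal.mul_mem_mul (haJ j (Finset.mem_Icc.mpr ⟨hj.1, hj.2.trans hi.2⟩))
      (Ideal.mul_mem_left _ _ (Ideal.pow_mem_pow hp _))
  · set y := r - p with hy
    have hr : r = y + p := by rw [hy]; ring
    rw [hr] at heq
    rw [← heq]
    simp only [add_mul, Finset.sum_add_distrib]
    rw [my_add_pow y p m]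
    have hswap : ∑ i ∈ Finset.Icc 1 m, (∑ j ∈ Finset.Icc 1 i,
          a j * (((m - j).choose (m - i) : R) * p ^ (i - j))) * y ^ (m - i)
        = ∑ j ∈ Finset.Icc 1 m, a j * (y + p) ^ (m - j) := by
      simp only [Finset.sum_mul]
      rw [Finset.sum_comm' (s' := fun j => Finset.Icc j m) (t' := Finset.Icc 1 m)
        (by intro i j; simp only [Finset.mem_Icc]; omega)]
      refine Finset.sum_congr rfl fun j hj => ?_
      simp only [Finset.mem_Icc] at hj
      rw [my_add_pow y p (m - j), Finset.Icc_eq_cons_Ioc hj.2, Finset.sum_cons]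
      rw [mul_add]
      simp only [Nat.choose_self, Nat.sub_self, pow_zero, Nat.cast_one, mul_one, one_mul]
      congr 1
      rw [Finset.mul_sum]
      refine Finset.sum_nbij' (fun i => i - j) (fun t => t + j) ?_ ?_ ?_ ?_ ?_
      · intro i hi; simp only [Finset.mem_Ioc] at hi
        simp only [Finset.mem_Icc]; omega
      · intro t ht; simp only [Finset.mem_Icc] at ht
        simp only [Finset.mem_Ioc]; omega
      · intro i hi; simp only [Finset.mem_Ioc] at hi; show i - j + j = i; omega
      · intro t ht; simp only [Finset.mem_Icc] at ht; show t + j - j = t; omega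
      · intro i hi
        simp only [Finset.mem_Ioc] at hi
        have h1 : m - j - (i - j) = m - i := by omega
        rw [h1]
        ring
    rw [hswap]
    ring

/-- Integrality is preserved by ring homomorphisms. -/
lemma IsIntegralOverIdeal.map {R S : Type*} [CommRing R] [CommRing S] (f : R →+* S)
    {J : Ideal R} {r : R} (h : IsIntegralOverIdeal J r) :
    IsIntegralOverIdeal (J.map f) (f r) := by
  obtain ⟨m, hm, a, haJ, heq⟩ := h
  refine ⟨m, hm, fun j => f (a j), fun j hj => ?_, ?_⟩
  · rw [← Ideal.map_pow]
    exact Ideal.mem_map_of_mem f (haJ j hj)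
  · have := congrArg f heq
    simpa [map_add, map_pow, map_sum, map_mul] using this

theorem stmt_13 {R : Type*} [CommRing R] [IsDomain R] [IsLocalRing R]
    [IsNoetherianRing R] (I : Ideal R) (x : R) (hx : x ∈ I)
    (hcl : I.IsIntClosed)
    (ha : ∀ n : ℕ, 1 ≤ n →
      ((I.map (Ideal.Quotient.mk (Ideal.span {x}))) ^ n).IsIntClosed)
    (hb : ∀ n : ℕ, 1 ≤ n → ∀ r : R,
      IsIntegralOverIdeal (I ^ n) (x * r) ↔ IsIntegralOverIdeal (I ^ (n - 1)) r) :
    ∀ n : ℕ, 1 ≤ n → (I ^ n).IsIntClosed := by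
  intro n
  induction n with
  | zero => omega
  | succ k ih =>
    intro _
    by_cases hk : k = 0
    · subst hk
      intro r hr
      rw [pow_one] at hr ⊢
      exact hcl r hr
    have hk1 : 1 ≤ k := by omega
    have ihk := ih hk1
    intro r hr
    -- pass to the quotient
    have h1 : IsIntegralOverIdeal ((I.map (Ideal.Quotient.mk (Ideal.span {x}))) ^ (k + 1))
        (Ideal.Quotient.mk (Ideal.span {x}) r) := by
      have := hr.map (Ideal.Quotient.mk (Ideal.span {x}))
      rwa [Ideal.map_pow] at this
    have h2 := ha (k + 1) (by omega) _ h1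
    rw [← Ideal.map_pow, Ideal.mem_quotient_iff_mem_sup] at h2
    obtain ⟨p, hp, q, hq, hpq⟩ := Submodule.mem_sup.mp h2
    obtain ⟨s, hs⟩ := Ideal.mem_span_singleton'.mp hq
    have h3 : IsIntegralOverIdeal (I ^ (k + 1)) (x * s) := by
      have h4 := hr.sub_mem hp
      have : r - p = x * s := by rw [← hpq, ← hs]; ring
      rwa [this] at h4
    have h5 := (hb (k + 1) (by omega) s).mp h3
    simp only [Nat.add_sub_cancel] at h5
    have hsI : s ∈ I ^ k := ihk s h5
    have hxs : x * s ∈ I ^ (k + 1) := by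
      rw [pow_succ, mul_comm x s]
      exact Ideal.mul_mem_mul hsI hx
    rw [← hpq, ← hs]
    rw [show s * x = x * s from mul_comm s x]
    exact Ideal.add_mem _ hp hxs
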